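/- (Weighted success bound with corrective term) Let w: X×Y→ℝ₊ and suppose a classifier f is Bayes optimal on the weighted mixture P_α^(w). Then the success satisfies S(α) ≥ 1 − ((1−α_eff)/α_eff) · E_{x∼P*}[Δ_x^w · P₀^(w)(x) / (P*)^(w)(x)] = 1 − ((1−α_eff)/α_eff)·(E_{x∼P*}[Δ_x·P₀(x)/P*(x)] + c), where α_eff is the effective collective size, Δ_x^w = max_y(P₀^(w)(y|x) − P₀^(w)(y*|x)), and c = E_{x∼P*}[Δ_x^w P₀^(w)(x)/(P*)^(w)(x) − Δ_x P₀(x)/P*(x)]. -/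

import Mathlib

open Finset

/-- The `w`-weighted version of a distribution `Q`: `Q^(w)(z) = w(z) Q(z) / E_Q[w]`. -/
noncomputable def wdist {Z : Type*} [Fintype Z] (Q w : Z → ℝ) : Z → ℝ :=
  fun z => w z * Q z / (∑ z', w z' * Q z')

/-- Weighted success bound with corrective term. -/
theorem stmt9 {X Y : Type*} [Fintype X] [Fintype Y] [DecidableEq Y] [Nonempty Y]
    (P0 Pstar : X × Y → ℝ) (w : X × Y → ℝ) (α αeff c : ℝ) (ystar : Y) (f : X → Y)
    (hP0 : ∀ z, 0 ≤ P0 z) (hP0sum : ∑ z, P0 z = 1)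
    (hPstar : ∀ z, 0 ≤ Pstar z) (hPstarsum : ∑ z, Pstar z = 1)
    (hw : ∀ z, 0 < w z) (hα : 0 < α) (hα1 : α < 1)
    (hdet : ∀ x y, y ≠ ystar → Pstar (x, y) = 0)
    -- effective collective size α_eff = α E_{P*}[w] / E_{P_α}[w]:
    (hαeff : αeff = α * (∑ z, w z * Pstar z)
        / (∑ z, w z * (α * Pstar z + (1 - α) * P0 z)))
    -- f is Bayes optimal on the weighted mixture (P_α)^(w):
    (hBayes : ∀ x y, wdist (fun z => α * Pstar z + (1 - α) * P0 z) w (x, y)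
        ≤ wdist (fun z => α * Pstar z + (1 - α) * P0 z) w (x, f x))
    -- pointwise sub-optimality gaps, unweighted and weighted:
    (Δx Δxw : X → ℝ)
    (hΔx : ∀ x, Δx x = Finset.univ.sup' Finset.univ_nonempty (fun y : Y =>
        P0 (x, y) / (∑ y', P0 (x, y')) - P0 (x, ystar) / (∑ y', P0 (x, y'))))
    (hΔxw : ∀ x, Δxw x = Finset.univ.sup' Finset.univ_nonempty (fun y : Y =>
        wdist P0 w (x, y) / (∑ y', wdist P0 w (x, y'))
          - wdist P0 w (x, ystar) / (∑ y', wdist P0 w (x, y'))))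
    -- corrective term:
    (hc : c = ∑ x, (∑ y, Pstar (x, y)) *
        (Δxw x * (∑ y, wdist P0 w (x, y)) / (∑ y, wdist Pstar w (x, y))
          - Δx x * (∑ y, P0 (x, y)) / (∑ y, Pstar (x, y)))) :
    (∑ x, (∑ y, Pstar (x, y)) * (if f x = ystar then 1 else 0))
        ≥ 1 - ((1 - αeff) / αeff) *
            (∑ x, (∑ y, Pstar (x, y)) *
              (Δxw x * (∑ y, wdist P0 w (x, y)) / (∑ y, wdist Pstar w (x, y)))) ∧
    (∑ x, (∑ y, Pstar (x, y)) *
        (Δxw x * (∑ y, wdist P0 w (x, y)) / (∑ y, wdist Pstar w (x, y))))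
      = (∑ x, (∑ y, Pstar (x, y)) *
          (Δx x * (∑ y, P0 (x, y)) / (∑ y, Pstar (x, y)))) + c := by
  classical
  constructor
  · -- main inequality
    set E0 := ∑ z, w z * P0 z with hE0def
    set Es := ∑ z, w z * Pstar z with hEsdef
    set EA := ∑ z, w z * (α * Pstar z + (1 - α) * P0 z) with hEAdef
    have exists_pos : ∀ (Q : X × Y → ℝ), (∀ z, 0 ≤ Q z) → (∑ z, Q z = 1) →
        0 < ∑ z, w z * Q z := by
      intro Q hQ hQs
      have h1 : ∃ z, 0 < Q z := by
        by_contra h; push_neg at h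
        have : ∑ z, Q z = 0 :=
          Finset.sum_eq_zero (fun z _ => le_antisymm (h z) (hQ z))
        rw [this] at hQs; norm_num at hQs
      obtain ⟨z0, hz0⟩ := h1
      exact Finset.sum_pos' (fun z _ => mul_nonneg (hw z).le (hQ z))
        ⟨z0, Finset.mem_univ _, mul_pos (hw z0) hz0⟩
    have hE0pos : 0 < E0 := exists_pos P0 hP0 hP0sum
    have hEspos : 0 < Es := exists_pos Pstar hPstar hPstarsum
    have hEA : EA = α * Es + (1 - α) * E0 := by
      rw [hEAdef, hE0def, hEsdef, Finset.mul_sum, Finset.mul_sum,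
        ← Finset.sum_add_distrib]
      exact Finset.sum_congr rfl (fun z _ => by ring)
    have hEApos : 0 < EA := by
      rw [hEA]; nlinarith
    have hαeffpos : 0 < αeff := by
      rw [hαeff]; positivity
    have hαeff1 : αeff < 1 := by
      rw [hαeff, div_lt_one hEApos, hEA]; nlinarith
    have hrnn : 0 ≤ (1 - αeff) / αeff := div_nonneg (by linarith) hαeffpos.le
    -- per-x abbreviations
    have hSs : ∀ x, ∑ y, w (x, y) * Pstar (x, y) = w (x, ystar) * Pstar (x, ystar) := by
      intro x
      exact Finset.sum_eq_single ystar
        (fun y _ hy => by rw [hdet x y hy]; ring)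
        (fun h => absurd (Finset.mem_univ ystar) h)
    have hMs : ∀ x, ∑ y, Pstar (x, y) = Pstar (x, ystar) := by
      intro x
      exact Finset.sum_eq_single ystar
        (fun y _ hy => hdet x y hy)
        (fun h => absurd (Finset.mem_univ ystar) h)
    have hMsw : ∀ x, ∑ y, wdist Pstar w (x, y)
        = w (x, ystar) * Pstar (x, ystar) / Es := by
      intro x
      simp only [wdist, ← hEsdef]
      rw [← Finset.sum_div, hSs]
    have hM0w : ∀ x, ∑ y, wdist P0 w (x, y)
        = (∑ y, w (x, y) * P0 (x, y)) / E0 := by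
      intro x
      simp only [wdist, ← hE0def]
      rw [← Finset.sum_div]
    have hΔxwnn : ∀ x, 0 ≤ Δxw x := by
      intro x
      rw [hΔxw]
      have := Finset.le_sup' (fun y : Y =>
        wdist P0 w (x, y) / (∑ y', wdist P0 w (x, y'))
          - wdist P0 w (x, ystar) / (∑ y', wdist P0 w (x, y')))
        (Finset.mem_univ ystar)
      simp only [sub_self] at this
      exact this
    have hS0nn : ∀ x, 0 ≤ ∑ y, w (x, y) * P0 (x, y) := fun x =>
      Finset.sum_nonneg (fun y _ => mul_nonneg (hw _).le (hP0 _))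
    -- key Bayes inequality for misclassified x
    have hkey : ∀ x, f x ≠ ystar →
        α * (w (x, ystar) * Pstar (x, ystar))
          ≤ (1 - α) * (Δxw x * (∑ y, w (x, y) * P0 (x, y))) := by
      intro x hfx
      have hB := hBayes x ystar
      simp only [wdist, ← hEAdef] at hB
      rw [div_le_div_iff_of_pos_right hEApos] at hB
      rw [hdet x (f x) hfx] at hB
      -- hB : w (x,ystar) * (α * Pstar (x,ystar) + (1-α) * P0 (x,ystar))
      --        ≤ w (x, f x) * (α * 0 + (1-α) * P0 (x, f x))
      have hD : w (x, f x) * P0 (x, f x) - w (x, ystar) * P0 (x, ystar)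
          ≤ Δxw x * (∑ y, w (x, y) * P0 (x, y)) := by
        rcases eq_or_lt_of_le (hS0nn x) with hS0 | hS0
        · have hall : ∀ y, w (x, y) * P0 (x, y) = 0 := by
            have := (Finset.sum_eq_zero_iff_of_nonneg
              (fun y (_ : y ∈ Finset.univ) => mul_nonneg (hw (x, y)).le (hP0 (x, y)))).mp hS0.symm
            intro y; exact this y (Finset.mem_univ y)
          rw [hall (f x), hall ystar, ← hS0]
          simp
        · have hsup := Finset.le_sup' (fun y : Y =>
            wdist P0 w (x, y) / (∑ y', wdist P0 w (x, y'))
              - wdist P0 w (x, ystar) / (∑ y', wdist P0 w (x, y')))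
            (Finset.mem_univ (f x))
          rw [← hΔxw x] at hsup
          have hrw : ∀ y : Y, wdist P0 w (x, y) / (∑ y', wdist P0 w (x, y'))
              = w (x, y) * P0 (x, y) / (∑ y', w (x, y') * P0 (x, y')) := by
            intro y
            rw [hM0w x]
            simp only [wdist, ← hE0def]
            rw [hM0w x] at *
            field_simp
          simp only [hrw] at hsup
          rw [div_sub_div_same, div_le_iff₀ hS0] at hsup
          linarith [hsup]
      nlinarith [hD, hB, hw (x, ystar), hPstar (x, ystar), hP0 (x, ystar)]
    -- ratio identity
    have hratio : (1 - αeff) / αeff = ((1 - α) * E0) / (α * Es) := by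
      have h1 : α * Es + (1 - α) * E0 ≠ 0 := by nlinarith
      have h2 : α * Es ≠ 0 := by positivity
      rw [hαeff, hEA]
      field_simp
      ring
    -- per-x bound
    have hxbound : ∀ x, f x ≠ ystar →
        (∑ y, Pstar (x, y)) ≤ (1 - αeff) / αeff *
          ((∑ y, Pstar (x, y)) *
            (Δxw x * (∑ y, wdist P0 w (x, y)) / (∑ y, wdist Pstar w (x, y)))) := by
      intro x hfx
      rw [hMs, hMsw, hM0w, hratio]
      rcases eq_or_lt_of_le (hPstar (x, ystar)) with hPs | hPs
      · rw [← hPs]; simp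
      · have hwys := hw (x, ystar)
        have hnum := hkey x hfx
        have heq : (1 - α) * E0 / (α * Es) *
            (Pstar (x, ystar) *
              (Δxw x * ((∑ y, w (x, y) * P0 (x, y)) / E0)
                / (w (x, ystar) * Pstar (x, ystar) / Es)))
            = (1 - α) * (Δxw x * (∑ y, w (x, y) * P0 (x, y))) / (α * w (x, ystar)) := by
          field_simp
        rw [heq, le_div_iff₀ (by positivity)]
        nlinarith [hnum, hPs.le]
    -- positivity of each bound term
    have hxnn : ∀ x, 0 ≤ (1 - αeff) / αeff *
        ((∑ y, Pstar (x, y)) *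
          (Δxw x * (∑ y, wdist P0 w (x, y)) / (∑ y, wdist Pstar w (x, y)))) := by
      intro x
      have h1 : 0 ≤ ∑ y, Pstar (x, y) := Finset.sum_nonneg (fun y _ => hPstar _)
      have h2 : 0 ≤ ∑ y, wdist P0 w (x, y) := by
        rw [hM0w]; exact div_nonneg (hS0nn x) hE0pos.le
      have h3 : 0 ≤ ∑ y, wdist Pstar w (x, y) := by
        rw [hMsw]
        exact div_nonneg (mul_nonneg (hw _).le (hPstar _)) hEspos.le
      exact mul_nonneg hrnn (mul_nonneg h1
        (div_nonneg (mul_nonneg (hΔxwnn x) h2) h3))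
    -- assemble
    have hsum1 : ∑ x, (∑ y, Pstar (x, y)) = 1 := by
      rw [← hPstarsum, Fintype.sum_prod_type]
    have key : ∑ x, ((∑ y, Pstar (x, y)) - (1 - αeff) / αeff *
          ((∑ y, Pstar (x, y)) *
            (Δxw x * (∑ y, wdist P0 w (x, y)) / (∑ y, wdist Pstar w (x, y)))))
        ≤ ∑ x, (∑ y, Pstar (x, y)) * (if f x = ystar then 1 else 0) := by
      apply Finset.sum_le_sum
      intro x _
      by_cases hfx : f x = ystar
      · rw [if_pos hfx, mul_one]
        linarith [hxnn x]
      · rw [if_neg hfx, mul_zero]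
        linarith [hxbound x hfx]
    rw [Finset.sum_sub_distrib, hsum1, ← Finset.mul_sum] at key
    exact key
  · -- the corrective-term identity
    rw [hc, ← Finset.sum_add_distrib]
    exact Finset.sum_congr rfl (fun x _ => by ring)
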